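/- Let G be a connected split graph with vertex partition V(G) = U ∪ W, where U induces a complete graph and W is a maximal independent set (so every vertex of U has a neighbor in W). For X ⊆ U let 𝒫(X) = {w ∈ W : N(w) = X}, and let ρ(G) = max{|X| + |𝒫(X)| : X ⊆ U}. If 𝒫(X) = ∅ for every X ⊆ U with |X| = |U| − 1, then χ_NL(G) = ρ(G); otherwise (if 𝒫(X) ≠ ∅ for some X ⊆ U with |X| = |U| − 1), χ_NL(G) = max{|U| + 1, ρ(G)}. -/

import Mathlib

open SimpleGraph

section Helpers
open Set

lemma aux_exists_bijOn {α β : Type*} [Nonempty β] {S : Set α} {T : Set β}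
    (hS : S.Finite) (hT : T.Finite) (h : S.ncard = T.ncard) :
    ∃ f : α → β, Set.BijOn f S T := by
  classical
  haveI := hS.to_subtype
  haveI := hT.to_subtype
  have hcard : Nat.card S = Nat.card T := by
    rwa [Nat.card_coe_set_eq, Nat.card_coe_set_eq]
  obtain ⟨eqv⟩ := Finite.card_eq.mp hcard
  refine ⟨fun a => if h : a ∈ S then (eqv ⟨a, h⟩ : β) else Classical.arbitrary β, ?_, ?_, ?_⟩
  · intro a ha
    simp only [dif_pos ha]
    exact (eqv ⟨a, ha⟩).2
  · intro a ha b hb hab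
    simp only [dif_pos ha, dif_pos hb] at hab
    have := eqv.injective (Subtype.coe_injective hab)
    exact congrArg Subtype.val this
  · intro t ht
    refine ⟨(eqv.symm ⟨t, ht⟩ : α), (eqv.symm ⟨t, ht⟩).2, ?_⟩
    simp only [dif_pos (eqv.symm ⟨t, ht⟩).2, Subtype.coe_eta, Equiv.apply_symm_apply]

lemma aux_exists_injOn {α β : Type*} [Nonempty β] {S : Set α} {T : Set β}
    (hS : S.Finite) (hT : T.Finite) (h : S.ncard ≤ T.ncard) :
    ∃ f : α → β, Set.InjOn f S ∧ Set.MapsTo f S T := by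
  obtain ⟨T', hT'sub, hT'card⟩ := Set.exists_subset_card_eq h
  obtain ⟨f, hf⟩ := aux_exists_bijOn hS (hT.subset hT'sub) hT'card.symm
  exact ⟨f, hf.injOn, hf.mapsTo.mono_right hT'sub⟩

end Helpers

/-- A coloring `c : V → Fin k` is a *neighbor-locating coloring* of `G` if it is proper and
any two distinct vertices with the same color have different sets of colors on their
open neighborhoods. -/
def IsNLColoring {V : Type*} (G : SimpleGraph V) {k : ℕ} (c : V → Fin k) : Prop :=
  (∀ u v : V, G.Adj u v → c u ≠ c v) ∧
  ∀ u v : V, u ≠ v → c u = c v → c '' (G.neighborSet u) ≠ c '' (G.neighborSet v)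

/-- The neighbor-locating chromatic number: the least `k` admitting an NL-coloring. -/
noncomputable def nlChromaticNumber {V : Type*} (G : SimpleGraph V) : ℕ :=
  sInf {k : ℕ | ∃ c : V → Fin k, IsNLColoring G c}

/-- NL-chromatic number of a connected split graph with clique `U` and maximal
independent set `W`, in terms of `ρ(G) = max {|X| + |𝒫(X)| : X ⊆ U}`, where
`𝒫(X) = {w ∈ W : N(w) = X}`. -/
theorem nlChromaticNumber_split_graph
    {V : Type*} [Fintype V] (G : SimpleGraph V) (hconn : G.Connected)
    (U W : Set V) (hUW : U ∪ W = Set.univ) (hdisj : Disjoint U W)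
    (hclique : ∀ u ∈ U, ∀ v ∈ U, u ≠ v → G.Adj u v)
    (hindep : ∀ u ∈ W, ∀ v ∈ W, ¬ G.Adj u v)
    (hmax : ∀ u ∈ U, ∃ w ∈ W, G.Adj u w) :
    ((∀ X ⊆ U, X.ncard = U.ncard - 1 → {w ∈ W | G.neighborSet w = X} = ∅) →
      nlChromaticNumber G =
        sSup {n : ℕ | ∃ X ⊆ U, n = X.ncard + {w ∈ W | G.neighborSet w = X}.ncard}) ∧
    ((∃ X ⊆ U, X.ncard = U.ncard - 1 ∧ {w ∈ W | G.neighborSet w = X} ≠ ∅) →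
      nlChromaticNumber G =
        max (U.ncard + 1)
          (sSup {n : ℕ | ∃ X ⊆ U, n = X.ncard + {w ∈ W | G.neighborSet w = X}.ncard})) := by
  classical
  haveI : Nonempty V := hconn.nonempty
  set P : Set V → Set V := fun X => {w ∈ W | G.neighborSet w = X} with hPdef
  set S : Set ℕ := {n : ℕ | ∃ X ⊆ U, n = X.ncard + (P X).ncard} with hSdef
  -- basic membership facts
  have hmemUW : ∀ v : V, v ∈ U ∨ v ∈ W := by
    intro v
    have : v ∈ U ∪ W := hUW ▸ Set.mem_univ v
    exact this
  have hnotUW : ∀ v : V, v ∈ U → v ∈ W → False := fun v hu hw =>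
    Set.disjoint_left.mp hdisj hu hw
  have hNW : ∀ w ∈ W, G.neighborSet w ⊆ U := by
    intro w hw x hx
    rcases hmemUW x with hxU | hxW
    · exact hxU
    · exact absurd hx (hindep w hw x hxW)
  have hwP : ∀ w ∈ W, w ∈ P (G.neighborSet w) := fun w hw => ⟨hw, rfl⟩
  have hPW : ∀ X, P X ⊆ W := fun X w hw => hw.1
  have hPn : ∀ X, ∀ w ∈ P X, G.neighborSet w = X := fun X w hw => hw.2
  have hWne : W.Nonempty := by
    obtain ⟨v⟩ := ‹Nonempty V›
    rcases hmemUW v with hv | hv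
    · obtain ⟨w, hw, -⟩ := hmax v hv
      exact ⟨w, hw⟩
    · exact ⟨v, hv⟩
  -- the set S is nonempty and bounded above
  have hSne : S.Nonempty := ⟨U.ncard + (P U).ncard, U, subset_rfl, rfl⟩
  have hSbdd : BddAbove S := by
    refine ⟨Fintype.card V, ?_⟩
    rintro n ⟨X, hXU, rfl⟩
    have hdisjXP : Disjoint X (P X) :=
      Set.disjoint_of_subset hXU (hPW X) hdisj
    rw [← Set.ncard_union_eq hdisjXP (Set.toFinite _) (Set.toFinite _)]
    calc (X ∪ P X).ncard ≤ (Set.univ : Set V).ncard :=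
          Set.ncard_le_ncard (Set.subset_univ _) (Set.toFinite _)
      _ = Fintype.card V := by rw [Set.ncard_univ, Nat.card_eq_fintype_card]
  set ρ : ℕ := sSup S with hρdef
  have hρ_mem : ∀ X ⊆ U, X.ncard + (P X).ncard ≤ ρ := fun X hX =>
    le_csSup hSbdd ⟨X, hX, rfl⟩
  have hρm : U.ncard ≤ ρ := le_trans (Nat.le_add_right _ _) (hρ_mem U subset_rfl)
  -- ρ ≥ 1
  have hρ1 : 1 ≤ ρ := by
    obtain ⟨w, hw⟩ := hWne
    have h1 : 1 ≤ (P (G.neighborSet w)).ncard := by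
      have : (P (G.neighborSet w)).Nonempty := ⟨w, hwP w hw⟩
      exact (Set.ncard_pos (Set.toFinite _)).mpr this
    exact le_trans h1 (le_trans (Nat.le_add_left _ _) (hρ_mem _ (hNW w hw)))
  -- injectivity of images of subsets of U under a map injective on U
  have himinj : ∀ {k : ℕ} (e : V → Fin k), Set.InjOn e U →
      ∀ X ⊆ U, ∀ Y ⊆ U, e '' X = e '' Y → X = Y := by
    intro k e he X hX Y hY h
    exact (he.image_eq_image_iff hX hY).mp h
  ------------------------------------------------------------------
  -- LOWER BOUND 1 : any NL-coloring uses at least ρ colors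
  ------------------------------------------------------------------
  have LB_rho : ∀ k : ℕ, ∀ c : V → Fin k, IsNLColoring G c → ρ ≤ k := by
    intro k c hc
    refine csSup_le hSne ?_
    rintro n ⟨X, hXU, rfl⟩
    have hdisjXP : Disjoint X (P X) := Set.disjoint_of_subset hXU (hPW X) hdisj
    have hinj : Set.InjOn c (X ∪ P X) := by
      intro a ha b hb hab
      by_contra hne
      rcases ha with haX | haP <;> rcases hb with hbX | hbP
      · exact hc.1 a b (hclique a (hXU haX) b (hXU hbX) hne) hab
      · -- a ∈ X, b ∈ P X : b adjacent to a
        have : G.Adj b a := by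
          have : a ∈ G.neighborSet b := (hPn X b hbP).symm ▸ haX
          exact this
        exact hc.1 b a this hab.symm
      · have : G.Adj a b := by
          have : b ∈ G.neighborSet a := (hPn X a haP).symm ▸ hbX
          exact this
        exact hc.1 a b this hab
      · -- both in P X : same neighborhoods
        have hNab : G.neighborSet a = G.neighborSet b := by
          rw [hPn X a haP, hPn X b hbP]
        exact hc.2 a b hne hab (by rw [hNab])
    calc X.ncard + (P X).ncard
        = (X ∪ P X).ncard := (Set.ncard_union_eq hdisjXP (Set.toFinite _) (Set.toFinite _)).symm
      _ = (c '' (X ∪ P X)).ncard := (Set.ncard_image_of_injOn hinj).symm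
      _ ≤ (Set.univ : Set (Fin k)).ncard :=
          Set.ncard_le_ncard (Set.subset_univ _) (Set.toFinite _)
      _ = k := by rw [Set.ncard_univ, Nat.card_eq_fintype_card, Fintype.card_fin]
  ------------------------------------------------------------------
  -- LOWER BOUND 2 : in case 2, at least U.ncard + 1 colors are needed
  ------------------------------------------------------------------
  have LB_m1 : (∃ X ⊆ U, X.ncard = U.ncard - 1 ∧ P X ≠ ∅) →
      ∀ k : ℕ, ∀ c : V → Fin k, IsNLColoring G c → U.ncard + 1 ≤ k := by
    rintro ⟨X, hXU, hXcard, hPXne⟩ k c hc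
    obtain ⟨w, hwPX⟩ := Set.nonempty_iff_ne_empty.mpr hPXne
    have hwW : w ∈ W := (hPW X) hwPX
    have hNw : G.neighborSet w = X := hPn X w hwPX
    have hkρ : ρ ≤ k := LB_rho k c hc
    have hkm : U.ncard ≤ k := le_trans hρm hkρ
    rcases Nat.eq_zero_or_pos U.ncard with hm0 | hmpos
    · -- U empty : k ≥ 1 since V is nonempty
      have hk1 : 0 < k := by
        obtain ⟨v⟩ := ‹Nonempty V›
        exact lt_of_le_of_lt (Nat.zero_le _) (c v).2
      omega
    -- U.ncard ≥ 1 : suppose k = U.ncard and derive a contradiction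
    by_contra hlt
    have hkm' : k = U.ncard := by omega
    -- c is injective on U with image of size U.ncard = k, hence surjective
    have hinjU : Set.InjOn c U := by
      intro a ha b hb hab
      by_contra hne
      exact hc.1 a b (hclique a ha b hb hne) hab
    have himU : c '' U = Set.univ := by
      apply Set.eq_of_subset_of_ncard_le (Set.subset_univ _) _ (Set.toFinite _)
      rw [Set.ncard_univ, Nat.card_eq_fintype_card, Fintype.card_fin,
        Set.ncard_image_of_injOn hinjU, hkm']
    -- X = U \ {u} for a unique u
    have hXfin : X.Finite := Set.toFinite _
    have hdiffcard : (U \ X).ncard = 1 := by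
      rw [Set.ncard_diff hXU (Set.toFinite _), hXcard]
      omega
    obtain ⟨u, hu⟩ := Set.ncard_eq_one.mp hdiffcard
    have huU : u ∈ U := by
      have : u ∈ U \ X := hu ▸ rfl
      exact this.1
    have huX : u ∉ X := by
      have : u ∈ U \ X := hu ▸ rfl
      exact this.2
    have hXeq : X = U \ {u} := by
      ext x
      constructor
      · intro hx
        refine ⟨hXU hx, ?_⟩
        intro hxu
        rw [Set.mem_singleton_iff] at hxu
        exact huX (hxu ▸ hx)
      · intro ⟨hxU, hxu⟩
        by_contra hxX
        have : x ∈ U \ X := ⟨hxU, hxX⟩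
        rw [hu] at this
        exact hxu this
    -- c w = c u
    have hcwX : ∀ x ∈ X, c w ≠ c x := by
      intro x hx
      have hadj : G.Adj w x := by
        have : x ∈ G.neighborSet w := hNw ▸ hx
        exact this
      exact hc.1 w x hadj
    have hcwu : c w = c u := by
      have : c w ∈ c '' U := himU ▸ Set.mem_univ _
      obtain ⟨y, hyU, hyc⟩ := this
      have hyX : y ∉ X := fun hyX => (hcwX y hyX) hyc.symm
      have : y ∈ U \ X := ⟨hyU, hyX⟩
      rw [hu, Set.mem_singleton_iff] at this
      exact (this ▸ hyc).symm
    have hwu : w ≠ u := fun h => hnotUW u huU (h ▸ hwW)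
    -- both neighborhoods have color set univ \ {c u}
    have him_w : c '' G.neighborSet w = Set.univ \ {c u} := by
      rw [hNw, hXeq]
      ext z
      constructor
      · rintro ⟨x, ⟨hxU, hxu⟩, rfl⟩
        refine ⟨Set.mem_univ _, ?_⟩
        intro h
        rw [Set.mem_singleton_iff] at h
        exact hxu (Set.mem_singleton_iff.mpr (hinjU hxU huU h))
      · rintro ⟨-, hz⟩
        rw [Set.mem_singleton_iff] at hz
        have : z ∈ c '' U := himU ▸ Set.mem_univ _
        obtain ⟨y, hyU, rfl⟩ := this
        have hyu : y ≠ u := fun h => hz (h ▸ rfl)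
        exact ⟨y, ⟨hyU, fun h => hyu (Set.mem_singleton_iff.mp h)⟩, rfl⟩
    have him_u : c '' G.neighborSet u = Set.univ \ {c u} := by
      ext z
      constructor
      · rintro ⟨x, hx, rfl⟩
        refine ⟨Set.mem_univ _, ?_⟩
        intro h
        rw [Set.mem_singleton_iff] at h
        exact hc.1 u x hx h.symm
      · rintro ⟨-, hz⟩
        rw [Set.mem_singleton_iff] at hz
        have : z ∈ c '' U := himU ▸ Set.mem_univ _
        obtain ⟨y, hyU, rfl⟩ := this
        have hyu : y ≠ u := fun h => hz (h ▸ rfl)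
        exact ⟨y, (G.mem_neighborSet u y).mpr (hclique u huU y hyU hyu.symm), rfl⟩
    exact hc.2 w u hwu hcwu (him_w.trans him_u.symm)
  ------------------------------------------------------------------
  -- UPPER BOUND : construction of an NL-coloring
  ------------------------------------------------------------------
  have CONSTR : ∀ k : ℕ, U.ncard ≤ k → (∀ X ⊆ U, X.ncard + (P X).ncard ≤ k) →
      ((∀ X ⊆ U, X.ncard = U.ncard - 1 → P X = ∅) ∨ U.ncard + 1 ≤ k) →
      ∃ c : V → Fin k, IsNLColoring G c := by
    intro k hkm hkbound hAlt
    have hk1 : 1 ≤ k := by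
      obtain ⟨w, hw⟩ := hWne
      have h1 : 1 ≤ (P (G.neighborSet w)).ncard :=
        (Set.ncard_pos (Set.toFinite _)).mpr ⟨w, hwP w hw⟩
      have := hkbound _ (hNW w hw)
      omega
    haveI : Nonempty (Fin k) := ⟨⟨0, hk1⟩⟩
    -- injection of U into the colors
    obtain ⟨e, heinj, -⟩ :=
      aux_exists_injOn (β := Fin k) (S := U) (T := Set.univ) (Set.toFinite _) (Set.toFinite _)
        (by rw [Set.ncard_univ, Nat.card_eq_fintype_card, Fintype.card_fin]; exact hkm)
    set H : Set (Fin k) := (e '' U)ᶜ with hHdef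
    have hHcard : H.ncard = k - U.ncard := by
      have h1 : (e '' U).ncard = U.ncard := Set.ncard_image_of_injOn heinj
      have h2 := Set.ncard_add_ncard_compl (e '' U) (Set.toFinite _) (Set.toFinite _)
      rw [Nat.card_eq_fintype_card, Fintype.card_fin, h1] at h2
      show (e '' U)ᶜ.ncard = k - U.ncard
      omega
    -- choice of colors for the independent vertices, class by class
    have hg : ∀ Y : Set V, ∃ g : V → Fin k, Set.InjOn g (P Y) ∧
        (∀ w ∈ P Y, g w ∈ (e '' Y)ᶜ) ∧
        (H.Nonempty → (P Y).Nonempty → ∃ w ∈ P Y, g w ∈ H) := by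
      intro Y
      by_cases hPY : (P Y).Nonempty
      · obtain ⟨w0, hw0⟩ := hPY
        have hYU : Y ⊆ U := (hPn Y w0 hw0) ▸ hNW w0 (hPW Y hw0)
        have hHA : H ⊆ (e '' Y)ᶜ := Set.compl_subset_compl.mpr (Set.image_mono hYU)
        have hAcard : (e '' Y)ᶜ.ncard = k - Y.ncard := by
          have h1 : (e '' Y).ncard = Y.ncard :=
            Set.ncard_image_of_injOn (heinj.mono hYU)
          have h2 := Set.ncard_add_ncard_compl (e '' Y) (Set.toFinite _) (Set.toFinite _)
          rw [Nat.card_eq_fintype_card, Fintype.card_fin, h1] at h2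
          omega
        have hbnd := hkbound Y hYU
        have hYk : Y.ncard ≤ k := le_trans (Nat.le_add_right _ _) hbnd
        have hPA : (P Y).ncard ≤ (e '' Y)ᶜ.ncard := by omega
        by_cases hsmall : (P Y).ncard ≤ H.ncard
        · obtain ⟨T, hTH, hTcard⟩ := Set.exists_subset_card_eq hsmall
          obtain ⟨g, hg⟩ := aux_exists_bijOn (Set.toFinite _) (Set.toFinite _) hTcard.symm
          refine ⟨g, hg.injOn, fun w hw => hHA (hTH (hg.mapsTo hw)), fun _ hne => ?_⟩
          obtain ⟨w, hw⟩ := hne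
          exact ⟨w, hw, hTH (hg.mapsTo hw)⟩
        · push_neg at hsmall
          obtain ⟨B, hHB, hBA, hBcard⟩ :=
            Set.exists_subsuperset_card_eq hHA (le_of_lt hsmall) hPA
          obtain ⟨g, hg⟩ := aux_exists_bijOn (Set.toFinite _) (Set.toFinite _) hBcard.symm
          refine ⟨g, hg.injOn, fun w hw => hBA (hg.mapsTo hw), fun hH _ => ?_⟩
          obtain ⟨h0, hh0⟩ := hH
          obtain ⟨w, hw, hgw⟩ := hg.surjOn (hHB hh0)
          exact ⟨w, hw, hgw ▸ hh0⟩
      · rw [Set.not_nonempty_iff_eq_empty] at hPY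
        exact ⟨fun _ => Classical.arbitrary _, by rw [hPY]; exact Set.injOn_empty _,
          by rw [hPY]; simp, fun _ hne => absurd hne (by rw [hPY]; simp [Set.not_nonempty_empty])⟩
    choose g hg1 hg2 hg3 using hg
    -- the coloring
    set c : V → Fin k := fun v => if v ∈ U then e v else g (G.neighborSet v) v with hcdef
    have hcU : ∀ v ∈ U, c v = e v := fun v hv => by simp [hcdef, hv]
    have hcW : ∀ w ∈ W, c w = g (G.neighborSet w) w := by
      intro w hw
      have hwU : w ∉ U := fun h => hnotUW w h hw
      simp [hcdef, hwU]
    have hcWmem : ∀ w ∈ W, c w ∈ (e '' G.neighborSet w)ᶜ := by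
      intro w hw
      rw [hcW w hw]
      exact hg2 _ w (hwP w hw)
    have himeq : ∀ X ⊆ U, c '' X = e '' X := by
      intro X hX
      apply Set.image_congr
      intro x hx
      exact hcU x (hX hx)
    -- properness
    have hproper : ∀ a b : V, G.Adj a b → c a ≠ c b := by
      have key : ∀ a b : V, a ∈ U → b ∈ W → G.Adj a b → c a ≠ c b := by
        intro a b ha hb hadj heq
        have haN : a ∈ G.neighborSet b := (G.mem_neighborSet b a).mpr hadj.symm
        have : c a ∈ e '' G.neighborSet b := ⟨a, haN, (hcU a ha).symm⟩
        exact (hcWmem b hb) (heq ▸ this)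
      intro a b hadj
      rcases hmemUW a with ha | ha <;> rcases hmemUW b with hb | hb
      · intro heq
        rw [hcU a ha, hcU b hb] at heq
        exact hadj.ne (heinj ha hb heq)
      · exact key a b ha hb hadj
      · exact fun heq => key b a hb ha hadj.symm heq.symm
      · exact absurd hadj (hindep a ha b hb)
    -- NL property, mixed case helper
    have keyNL : ∀ u w : V, u ∈ U → w ∈ W → c u = c w →
        c '' G.neighborSet u ≠ c '' G.neighborSet w := by
      intro u w hu hw heq
      set X : Set V := G.neighborSet w with hXdef
      have hXU : X ⊆ U := hNW w hw
      have himw : c '' G.neighborSet w = e '' X := himeq X hXU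
      have hcwX : c w ∉ e '' X := hcWmem w hw
      have huX : u ∉ X := by
        intro huX
        exact hcwX (heq ▸ ⟨u, huX, (hcU u hu).symm⟩)
      by_cases hex : ∃ u' ∈ U, u' ≠ u ∧ u' ∉ X
      · obtain ⟨u', hu'U, hu'u, hu'X⟩ := hex
        have hmem : c u' ∈ c '' G.neighborSet u :=
          ⟨u', (G.mem_neighborSet u u').mpr (hclique u hu u' hu'U hu'u.symm), rfl⟩
        have hnmem : c u' ∉ c '' G.neighborSet w := by
          rw [himw]
          rintro ⟨x, hxX, hxc⟩
          rw [hcU u' hu'U] at hxc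
          exact hu'X (heinj (hXU hxX) hu'U hxc ▸ hxX)
        exact fun h => hnmem (h ▸ hmem)
      · push_neg at hex
        have hXeq : X = U \ {u} := by
          ext x
          constructor
          · intro hx
            exact ⟨hXU hx, fun h => huX ((Set.mem_singleton_iff.mp h) ▸ hx)⟩
          · rintro ⟨hxU, hxu⟩
            by_contra hxX
            exact hxX (hex x hxU (fun h => hxu (Set.mem_singleton_iff.mpr h)) )
        have hXcard : X.ncard = U.ncard - 1 := by
          rw [hXeq]
          exact Set.ncard_diff_singleton_of_mem hu
        rcases hAlt with hcase1 | hcase2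
        · exact absurd (hcase1 X hXU hXcard) (Set.nonempty_iff_ne_empty.mp ⟨w, hwP w hw⟩)
        · -- there is a neighbor of u with a "high" color
          have hHne : H.Nonempty := by
            apply (Set.ncard_pos (Set.toFinite _)).mp
            rw [hHcard]
            exact Nat.sub_pos_of_lt hcase2
          obtain ⟨w', hw'W, hadj'⟩ := hmax u hu
          have hw'P : w' ∈ P (G.neighborSet w') := hwP w' hw'W
          obtain ⟨w'', hw''P, hw''H⟩ := hg3 _ hHne ⟨w', hw'P⟩
          have hw''W : w'' ∈ W := hPW _ hw''P
          have hw''N : G.neighborSet w'' = G.neighborSet w' := hPn _ w'' hw''P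
          have huN : u ∈ G.neighborSet w'' := by
            rw [hw''N]
            exact (G.mem_neighborSet w' u).mpr hadj'.symm
          have hcw'' : c w'' ∈ H := by
            rw [hcW w'' hw''W, hw''N]
            exact hw''H
          have hadj'' : G.Adj w'' u := huN
          have hmem : c w'' ∈ c '' G.neighborSet u :=
            ⟨w'', (G.mem_neighborSet u w'').mpr hadj''.symm, rfl⟩
          have hnmem : c w'' ∉ c '' G.neighborSet w := by
            rw [himw]
            intro hmem'
            exact hcw'' (Set.image_mono hXU hmem')
          exact fun h => hnmem (h ▸ hmem)
    have hNL : IsNLColoring G c := by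
      refine ⟨hproper, ?_⟩
      intro a b hne heq
      rcases hmemUW a with ha | ha <;> rcases hmemUW b with hb | hb
      · exact absurd (heinj ha hb (by rwa [hcU a ha, hcU b hb] at heq)) hne
      · exact keyNL a b ha hb heq
      · exact fun h => keyNL b a hb ha heq.symm h.symm
      · -- both in W
        by_cases hYY : G.neighborSet a = G.neighborSet b
        · have hbP : b ∈ P (G.neighborSet a) := ⟨hb, hYY.symm⟩
          have haP : a ∈ P (G.neighborSet a) := hwP a ha
          have hgab : g (G.neighborSet a) a = g (G.neighborSet a) b := by
            calc g (G.neighborSet a) a = c a := (hcW a ha).symm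
              _ = c b := heq
              _ = g (G.neighborSet b) b := hcW b hb
              _ = g (G.neighborSet a) b := by rw [hYY]
          exact absurd (hg1 (G.neighborSet a) haP hbP hgab) hne
        · have h1 : c '' G.neighborSet a = e '' G.neighborSet a := himeq _ (hNW a ha)
          have h2 : c '' G.neighborSet b = e '' G.neighborSet b := himeq _ (hNW b hb)
          rw [h1, h2]
          intro h
          exact hYY (himinj e heinj _ (hNW a ha) _ (hNW b hb) h)
    exact ⟨c, hNL⟩
  ------------------------------------------------------------------
  -- assembling the two statements
  ------------------------------------------------------------------
  constructor
  · intro h1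
    obtain ⟨c, hc⟩ := CONSTR ρ hρm (fun X hX => hρ_mem X hX) (Or.inl h1)
    apply le_antisymm
    · exact Nat.sInf_le ⟨c, hc⟩
    · exact le_csInf ⟨ρ, c, hc⟩ (fun k ⟨ck, hck⟩ => LB_rho k ck hck)
  · intro h2
    obtain ⟨c, hc⟩ := CONSTR (max (U.ncard + 1) ρ)
      (le_trans (Nat.le_succ U.ncard) (le_max_left _ _))
      (fun X hX => le_trans (hρ_mem X hX) (le_max_right _ _))
      (Or.inr (le_max_left _ _))
    apply le_antisymm
    · exact Nat.sInf_le ⟨c, hc⟩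
    · refine le_csInf ⟨max (U.ncard + 1) ρ, c, hc⟩ ?_
      rintro k ⟨ck, hck⟩
      exact max_le (LB_m1 h2 k ck hck) (LB_rho k ck hck)
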